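/- Let n, m ≥ 1 be integers and let f : ℤ → ℤ be a nondecreasing map satisfying f(x+n) = f(x)+m for all x ∈ ℤ. (1) If a, b ∈ ℤ satisfy f(x+a) = f(x)+b for all x ∈ ℤ, then n·b = m·a. (2) Consequently, if a, k ∈ ℤ satisfy f(x+a) = f(x)+k·m for all x ∈ ℤ, then a = k·n. In particular, the actions of Aut([n]) ≅ ℤ/nℤ and of Aut([m]) ≅ ℤ/mℤ on the set of morphisms [n] → [m] of the cyclic category, given by pre- and post-composition with translations, are both free. -/

import Mathlib

lemma iter_trans (f : ℤ → ℤ) (c d : ℤ) (h : ∀ x, f (x + c) = f x + d) :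
    ∀ t x : ℤ, f (x + t * c) = f x + t * d := by
  intro t
  induction t using Int.induction_on with
  | zero => simp
  | succ k ih =>
      intro x
      have h1 : x + (k + 1 : ℤ) * c = (x + k * c) + c := by ring
      rw [h1, h, ih]; ring
  | pred k ih =>
      intro x
      have h1 : x + (-k - 1 : ℤ) * c = (x + (-k : ℤ) * c) - c := by ring
      have h2 : f (x + (-k : ℤ) * c) = f ((x + (-k : ℤ) * c) - c) + d := by
        have := h ((x + (-k : ℤ) * c) - c); rw [sub_add_cancel] at this; exact this
      rw [h1]
      have h3 := ih x
      have : (-k - 1 : ℤ) * d = (-k : ℤ) * d - d := by ring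
      omega

/-- The freeness part of Lemma `fp.le`: for a nondecreasing map `f : ℤ → ℤ` with
`f (x + n) = f x + m` (representing a morphism `[n] → [m]` of the cyclic category),
any translation identity `f (x + a) = f x + b` forces `n * b = m * a`; in particular
`f (x + a) = f x + k * m` forces `a = k * n`, so the actions of `Aut([n])` and
`Aut([m])` on `Λ([n],[m])` are free. -/
theorem stmt_0 (n m : ℤ) (hn : 1 ≤ n) (hm : 1 ≤ m) (f : ℤ → ℤ)
    (hmono : Monotone f) (hper : ∀ x : ℤ, f (x + n) = f x + m) :
    (∀ a b : ℤ, (∀ x : ℤ, f (x + a) = f x + b) → n * b = m * a) ∧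
    (∀ a k : ℤ, (∀ x : ℤ, f (x + a) = f x + k * m) → a = k * n) := by
  have key : ∀ a b : ℤ, (∀ x : ℤ, f (x + a) = f x + b) → n * b = m * a := by
    intro a b hab
    have h1 := iter_trans f a b hab n 0
    have h2 := iter_trans f n m hper a 0
    rw [show (0 : ℤ) + n * a = 0 + a * n by ring] at h1
    rw [h1] at h2
    linarith [h2]
  refine ⟨key, ?_⟩
  intro a k hak
  have := key a (k * m) hak
  have hm0 : m ≠ 0 := by omega
  have : m * (k * n) = m * a := by linarith [this]
  exact (mul_left_cancel₀ hm0 this).symm
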